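/- Let (E, ‖·‖) be a two-dimensional real normed vector space and let y₀, y₁, …, y₅ ∈ E (indexed cyclically modulo 6) satisfy: ‖y_i‖ = 1 for every i, ‖y_{i+1} − y_i‖ = 1 for every i, y_{i+3} = −y_i for every i, and every vector of E lies in cone(y_i, y_{i+1}) for some i. Let X be a finite nonempty set of points of E and let s ∈ E with s ∉ X. Then there exists a minimum spanning tree T on X ∪ {s} with the following property: for each i = 0, …, 5, there is at most one point x ∈ X adjacent to s in T with x − s ∈ cone(y_i, y_{i+1}), and any such x satisfies ‖x − s‖ ≤ ‖x′ − s‖ for every x′ ∈ X with x′ − s ∈ cone(y_i, y_{i+1}). -/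

import Mathlib

open scoped Classical

/-- The length of an edge `{u, v}` between points of `X`, namely `‖u − v‖`. -/
noncomputable def edgeLen {E : Type*} [NormedAddCommGroup E] {X : Finset E}
    (e : Sym2 {x // x ∈ X}) : ℝ :=
  Sym2.lift ⟨fun u v : {x // x ∈ X} => ‖(u : E) - (v : E)‖, fun u v => norm_sub_rev _ _⟩ e

/-- The length of a graph on the points of `X`: the sum of the lengths of its edges. -/
noncomputable def graphLen {E : Type*} [NormedAddCommGroup E] {X : Finset E}
    (G : SimpleGraph {x // x ∈ X}) : ℝ :=
  ∑ e ∈ G.edgeFinset, edgeLen e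

/-- A minimum spanning tree on a finite set `X` of points: a spanning tree (connected and
acyclic graph on `X`) of minimum total length. -/
def IsMST {E : Type*} [NormedAddCommGroup E] {X : Finset E}
    (G : SimpleGraph {x // x ∈ X}) : Prop :=
  G.IsTree ∧ ∀ G' : SimpleGraph {x // x ∈ X}, G'.IsTree → graphLen G ≤ graphLen G'

/-- The cone generated by `a` and `b`: all non-negative combinations `α • a + β • b`. -/
def cone {E : Type*} [AddCommGroup E] [Module ℝ E] (a b : E) : Set E :=
  {w | ∃ α β : ℝ, 0 ≤ α ∧ 0 ≤ β ∧ w = α • a + β • b}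

open SimpleGraph

section Helpers
variable {E : Type*} [NormedAddCommGroup E] [NormedSpace ℝ E]

lemma coord_le_norm {a b : E} (ha : ‖a‖ = 1) (hab : ‖b - a‖ = 1)
    {α β : ℝ} (hα : 0 ≤ α) (hβ : 0 ≤ β) : α ≤ ‖α • a + β • b‖ := by
  have ha0 : a ≠ 0 := by
    intro h; rw [h, norm_zero] at ha; norm_num at ha
  obtain ⟨g, hg1, hg2⟩ := exists_dual_vector ℝ a (norm_ne_zero_iff.mpr ha0)
  simp only [RCLike.ofReal_real_eq_id, id] at hg2
  have hga : g a = 1 := by rw [hg2, ha]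
  have hgb : (0:ℝ) ≤ g b := by
    have h1 : g (a - b) ≤ 1 := by
      calc g (a - b) ≤ ‖g (a - b)‖ := le_abs_self _
        _ ≤ ‖g‖ * ‖a - b‖ := g.le_opNorm _
        _ = 1 := by rw [hg1, ← norm_neg (a - b)]; simp [hab, neg_sub]
    have h2 : g (a - b) = g a - g b := by simp
    linarith [h2 ▸ h1, hga]
  have key : g (α • a + β • b) = α + β * g b := by simp [hga]
  calc α ≤ α + β * g b := by nlinarith
    _ = g (α • a + β • b) := key.symm
    _ ≤ ‖g (α • a + β • b)‖ := le_abs_self _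
    _ ≤ ‖g‖ * ‖α • a + β • b‖ := g.le_opNorm _
    _ = ‖α • a + β • b‖ := by rw [hg1, one_mul]

lemma norm_le_norm_add_smul {a b : E} (ha : ‖a‖ = 1) (hb : ‖b‖ = 1) (hab : ‖b - a‖ = 1)
    {α β t : ℝ} (hα : 0 ≤ α) (hβ : 0 ≤ β) (ht : 0 ≤ t) :
    ‖α • a + β • b‖ ≤ ‖α • a + β • b + t • a‖ := by
  set w := α • a + β • b with hw
  rcases eq_or_ne w 0 with h0 | h0
  · rw [h0, norm_zero]; exact norm_nonneg _
  obtain ⟨g, hg1, hg2⟩ := exists_dual_vector ℝ w (norm_ne_zero_iff.mpr h0)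
  simp only [RCLike.ofReal_real_eq_id, id] at hg2
  have hga : 0 ≤ g a := by
    by_contra hga
    push_neg at hga
    have hβw : β ≤ ‖w‖ := by
      have := coord_le_norm hb (by rw [← norm_neg (a-b)]; simp [hab, neg_sub]) hβ hα
      rwa [add_comm] at this
    have hgb1 : g b ≤ 1 := by
      calc g b ≤ ‖g b‖ := le_abs_self _
        _ ≤ ‖g‖ * ‖b‖ := g.le_opNorm _
        _ = 1 := by rw [hg1, hb, one_mul]
    rcases hα.eq_or_lt with hα0 | hα0
    · -- α = 0 : w = β • b, so g b = 1, and g a ≥ g b - ‖b - a‖ = 0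
      have hβ0 : 0 < β := by
        rcases hβ.eq_or_lt with h | h
        · exfalso; apply h0; rw [hw, ← hα0, ← h]; simp
        · exact h
      have hwb : ‖w‖ = β := by
        rw [hw, ← hα0]; simp [norm_smul, hb, abs_of_nonneg hβ]
      have hgb : g b = 1 := by
        have : g w = β * g b := by rw [hw, ← hα0]; simp
        rw [hg2, hwb] at this
        field_simp at this
        linarith [this]
      have : g (b - a) ≤ 1 := by
        calc g (b - a) ≤ ‖g (b - a)‖ := le_abs_self _
          _ ≤ ‖g‖ * ‖b - a‖ := g.le_opNorm _
          _ = 1 := by rw [hg1, hab, one_mul]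
      have h2 : g (b - a) = g b - g a := by simp
      linarith
    · have hgw : g w = α * g a + β * g b := by rw [hw]; simp
      have : ‖w‖ < β := by
        rw [← hg2, hgw]
        nlinarith
      linarith
  calc ‖w‖ = g w := hg2.symm
    _ ≤ g w + t * g a := by nlinarith
    _ = g (w + t • a) := by simp
    _ ≤ ‖g (w + t • a)‖ := le_abs_self _
    _ ≤ ‖g‖ * ‖w + t • a‖ := g.le_opNorm _
    _ = ‖w + t • a‖ := by rw [hg1, one_mul]


lemma norm_cone_mono {a b : E} (ha : ‖a‖ = 1) (hb : ‖b‖ = 1) (hab : ‖b - a‖ = 1)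
    {α β α' β' : ℝ} (hα' : 0 ≤ α') (hβ' : 0 ≤ β') (h1 : α' ≤ α) (h2 : β' ≤ β) :
    ‖α' • a + β' • b‖ ≤ ‖α • a + β • b‖ := by
  have hab' : ‖a - b‖ = 1 := by rw [← norm_neg (a - b)]; simp [hab, neg_sub]
  calc ‖α' • a + β' • b‖ ≤ ‖α' • a + β' • b + (α - α') • a‖ :=
        norm_le_norm_add_smul ha hb hab hα' hβ' (by linarith)
    _ = ‖β' • b + α • a‖ := by rw [show α' • a + β' • b + (α - α') • a = β' • b + α • a by module]
    _ ≤ ‖β' • b + α • a + (β - β') • b‖ :=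
        norm_le_norm_add_smul hb ha hab' hβ' (by linarith) (by linarith)
    _ = ‖α • a + β • b‖ := by rw [show β' • b + α • a + (β - β') • b = α • a + β • b by module]

lemma cone_norm_sub_le {a b : E} (ha : ‖a‖ = 1) (hb : ‖b‖ = 1) (hab : ‖b - a‖ = 1)
    {u v : E} (hu : u ∈ cone a b) (hv : v ∈ cone a b) :
    ‖u - v‖ ≤ max ‖u‖ ‖v‖ := by
  have hab' : ‖a - b‖ = 1 := by rw [← norm_neg (a - b)]; simp [hab, neg_sub]
  -- mixed-sign helper
  have mixed : ∀ α β γ δ : ℝ, 0 ≤ α → 0 ≤ β → 0 ≤ γ → 0 ≤ δ → γ ≤ α → β ≤ δ →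
      ‖(α • a + β • b) - (γ • a + δ • b)‖ ≤
        max ‖α • a + β • b‖ ‖γ • a + δ • b‖ := by
    intro α β γ δ hα hβ hγ hδ h1 h2
    rcases le_total (α - γ) (δ - β) with hpq | hpq
    · refine le_trans ?_ (le_max_right _ _)
      have hδv : δ ≤ ‖γ • a + δ • b‖ := by
        rw [add_comm]; exact coord_le_norm hb hab' hδ hγ
      calc ‖(α • a + β • b) - (γ • a + δ • b)‖
          = ‖(α - γ) • (a - b) + (-(δ - β - (α - γ))) • b‖ := by
            rw [show (α • a + β • b) - (γ • a + δ • b)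
              = (α - γ) • (a - b) + (-(δ - β - (α - γ))) • b by module]
        _ ≤ ‖(α - γ) • (a - b)‖ + ‖(-(δ - β - (α - γ))) • b‖ := norm_add_le _ _
        _ = δ - β := by
            rw [norm_smul, norm_smul, hab', hb, mul_one, mul_one, Real.norm_eq_abs, Real.norm_eq_abs,
              abs_of_nonneg (by linarith : (0:ℝ) ≤ α - γ), abs_neg,
              abs_of_nonneg (by linarith : (0:ℝ) ≤ δ - β - (α - γ))]
            ring
        _ ≤ ‖γ • a + δ • b‖ := by linarith
    · refine le_trans ?_ (le_max_left _ _)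
      have hαu : α ≤ ‖α • a + β • b‖ := coord_le_norm ha hab hα hβ
      calc ‖(α • a + β • b) - (γ • a + δ • b)‖
          = ‖(δ - β) • (a - b) + (α - γ - (δ - β)) • a‖ := by
            rw [show (α • a + β • b) - (γ • a + δ • b)
              = (δ - β) • (a - b) + (α - γ - (δ - β)) • a by module]
        _ ≤ ‖(δ - β) • (a - b)‖ + ‖(α - γ - (δ - β)) • a‖ := norm_add_le _ _
        _ = α - γ := by
            rw [norm_smul, norm_smul, hab', ha, mul_one, mul_one, Real.norm_eq_abs, Real.norm_eq_abs,
              abs_of_nonneg (by linarith : (0:ℝ) ≤ δ - β),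
              abs_of_nonneg (by linarith : (0:ℝ) ≤ α - γ - (δ - β))]
            ring
        _ ≤ ‖α • a + β • b‖ := by linarith
  obtain ⟨α, β, hα, hβ, rfl⟩ := hu
  obtain ⟨γ, δ, hγ, hδ, rfl⟩ := hv
  rcases le_total γ α with h1 | h1 <;> rcases le_total β δ with h2 | h2
  · exact mixed α β γ δ hα hβ hγ hδ h1 h2
  · refine le_trans ?_ (le_max_left _ _)
    calc ‖(α • a + β • b) - (γ • a + δ • b)‖
        = ‖(α - γ) • a + (β - δ) • b‖ := by
          rw [show (α • a + β • b) - (γ • a + δ • b) = (α - γ) • a + (β - δ) • b by module]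
      _ ≤ ‖α • a + β • b‖ :=
          norm_cone_mono ha hb hab (by linarith) (by linarith) (by linarith) (by linarith)
  · rw [norm_sub_rev]
    refine le_trans ?_ (le_max_right _ _)
    calc ‖(γ • a + δ • b) - (α • a + β • b)‖
        = ‖(γ - α) • a + (δ - β) • b‖ := by
          rw [show (γ • a + δ • b) - (α • a + β • b) = (γ - α) • a + (δ - β) • b by module]
      _ ≤ ‖γ • a + δ • b‖ :=
          norm_cone_mono ha hb hab (by linarith) (by linarith) (by linarith) (by linarith)
  · rw [norm_sub_rev, max_comm]
    exact mixed γ δ α β hγ hδ hα hβ h1 h2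


end Helpers

lemma reachable_of_forall_adj {G H : SimpleGraph V}
    (h : ∀ a b, G.Adj a b → H.Reachable a b) {u v : V} (huv : G.Reachable u v) :
    H.Reachable u v := by
  obtain ⟨w⟩ := huv
  induction w with
  | nil => exact Reachable.refl _
  | cons ha _ ih => exact (h _ _ ha).trans ih

/-- In a tree with an edge `u₁v₁`, every vertex is reachable from `u₁` or from `v₁`
after deleting that edge. -/
lemma tree_comp_dichotomy {T : SimpleGraph V} (hT : T.Connected) {u₁ v₁ : V}
    (w : V) :
    (T \ fromEdgeSet {s(u₁, v₁)}).Reachable u₁ w ∨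
      (T \ fromEdgeSet {s(u₁, v₁)}).Reachable v₁ w := by
  set D := T \ fromEdgeSet {s(u₁, v₁)} with hD
  obtain ⟨p⟩ := hT.preconnected u₁ w
  have main : ∀ {y z : V} (_ : T.Walk y z), (D.Reachable u₁ y ∨ D.Reachable v₁ y) →
      (D.Reachable u₁ z ∨ D.Reachable v₁ z) := by
    intro y z p
    induction p with
    | nil => exact id
    | @cons y' z' w' h p ih =>
      intro hy
      apply ih
      by_cases he : s(y', z') = s(u₁, v₁)
      · rw [Sym2.eq_iff] at he
        rcases he with ⟨rfl, rfl⟩ | ⟨rfl, rfl⟩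
        · right; exact Reachable.refl _
        · left; exact Reachable.refl _
      · have hadj : D.Adj y' z' := by
          rw [hD, sdiff_adj]
          refine ⟨h, fun hf => ?_⟩
          rw [fromEdgeSet_adj] at hf
          exact he (by simpa using hf.1)
        rcases hy with hy | hy
        · exact Or.inl (hy.trans hadj.reachable)
        · exact Or.inr (hy.trans hadj.reachable)
  exact main p (Or.inl (Reachable.refl _))

/-- Swapping an edge of a tree for a new edge joining the two components. -/
lemma tree_swap {T : SimpleGraph V} (hT : T.IsTree) {u₁ v₁ u₂ v₂ : V}
    (h1 : T.Adj u₁ v₁) (h2 : u₂ ≠ v₂) (hne : s(u₂, v₂) ≠ s(u₁, v₁))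
    (hru : (T \ fromEdgeSet {s(u₁, v₁)}).Reachable u₁ u₂)
    (hrv : (T \ fromEdgeSet {s(u₁, v₁)}).Reachable v₁ v₂) :
    ((T \ fromEdgeSet {s(u₁, v₁)}) ⊔ fromEdgeSet {s(u₂, v₂)}).IsTree ∧
    ((T \ fromEdgeSet {s(u₁, v₁)}) ⊔ fromEdgeSet {s(u₂, v₂)}).edgeSet
        = insert s(u₂, v₂) (T.edgeSet \ {s(u₁, v₁)}) ∧
    (∀ a b : V, ((T \ fromEdgeSet {s(u₁, v₁)}) ⊔ fromEdgeSet {s(u₂, v₂)}).Adj a b ↔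
      (T.Adj a b ∧ s(a, b) ≠ s(u₁, v₁)) ∨ s(a, b) = s(u₂, v₂)) ∧
    s(u₂, v₂) ∉ T.edgeSet := by
  set D := T \ fromEdgeSet {s(u₁, v₁)} with hD
  set T' := D ⊔ fromEdgeSet {s(u₂, v₂)} with hT'
  have hDadj : ∀ a b : V, D.Adj a b ↔ T.Adj a b ∧ s(a, b) ≠ s(u₁, v₁) := by
    intro a b
    rw [hD, sdiff_adj, fromEdgeSet_adj]
    constructor
    · rintro ⟨h, h'⟩
      exact ⟨h, fun hf => h' ⟨by simp [hf], h.ne⟩⟩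
    · rintro ⟨h, h'⟩
      exact ⟨h, fun hf => h' (by simpa using hf.1)⟩
  have hbridge : ¬ D.Reachable u₁ v₁ := by
    have := (isAcyclic_iff_forall_adj_isBridge.mp hT.IsAcyclic) h1
    rw [isBridge_iff] at this
    exact this
  have hadj' : ∀ a b : V, T'.Adj a b ↔
      (T.Adj a b ∧ s(a, b) ≠ s(u₁, v₁)) ∨ s(a, b) = s(u₂, v₂) := by
    intro a b
    rw [hT', sup_adj, hDadj, fromEdgeSet_adj]
    constructor
    · rintro (h | ⟨h, _⟩)
      · exact Or.inl h
      · exact Or.inr (by simpa using h)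
    · rintro (h | h)
      · exact Or.inl h
      · refine Or.inr ⟨by simp [h], fun hab => h2 ?_⟩
        subst hab
        rw [Sym2.eq_iff] at h
        rcases h with ⟨rfl, rfl⟩ | ⟨rfl, rfl⟩ <;> rfl
  have hnmem : s(u₂, v₂) ∉ T.edgeSet := by
    intro hmem
    have hDadj2 : D.Adj u₂ v₂ := (hDadj u₂ v₂).mpr ⟨hmem, hne⟩
    exact hbridge (hru.trans (hDadj2.reachable.trans hrv.symm))
  have hedge : T'.edgeSet = insert s(u₂, v₂) (T.edgeSet \ {s(u₁, v₁)}) := by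
    ext e
    induction e using Sym2.inductionOn with
    | hf a b =>
      rw [mem_edgeSet, hadj']
      simp only [Set.mem_insert_iff, Set.mem_diff, Set.mem_singleton_iff, mem_edgeSet]
      tauto
  have hDle : D ≤ T' := le_sup_left
  have hadj2 : T'.Adj u₂ v₂ := (hadj' u₂ v₂).mpr (Or.inr rfl)
  have hreach11 : T'.Reachable u₁ v₁ :=
    ((hru.mono hDle).trans hadj2.reachable).trans (hrv.mono hDle).symm
  have hconn : T'.Connected := by
    have hpre : T'.Preconnected := by
      intro a b
      refine reachable_of_forall_adj ?_ (hT.isConnected.preconnected a b)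
      intro a b hab
      by_cases he : s(a, b) = s(u₁, v₁)
      · rw [Sym2.eq_iff] at he
        rcases he with ⟨rfl, rfl⟩ | ⟨rfl, rfl⟩
        · exact hreach11
        · exact hreach11.symm
      · exact ((hadj' a b).mpr (Or.inl ⟨hab, he⟩)).reachable
    have := hT.isConnected.nonempty
    exact Connected.mk hpre
  have hacyc : T'.IsAcyclic := by
    intro v c hc
    by_cases he : s(u₂, v₂) ∈ c.edges
    · have hnb : ¬ T'.IsBridge s(u₂, v₂) := by
        intro hb
        exact (isBridge_iff_forall_cycle_notMem hadj2).mp hb c hc he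
      rw [isBridge_iff] at hnb
      push_neg at hnb
      have hreach : (T' \ fromEdgeSet {s(u₂, v₂)}).Reachable u₂ v₂ := hnb
      have hTeq : T' \ fromEdgeSet {s(u₂, v₂)} = D := by
        ext a b
        rw [sdiff_adj, hadj' a b, fromEdgeSet_adj, hDadj a b]
        constructor
        · rintro ⟨h | h, h'⟩
          · exact h
          · exact absurd ⟨by simp [h], fun hab => h2 (by
              subst hab
              rw [Sym2.eq_iff] at h
              rcases h with ⟨rfl, rfl⟩ | ⟨rfl, rfl⟩ <;> rfl)⟩ h'
        · rintro ⟨h, h'⟩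
          refine ⟨Or.inl ⟨h, h'⟩, fun hf => hnmem ?_⟩
          have : s(a, b) = s(u₂, v₂) := by simpa using hf.1
          rw [← this]
          exact h
      rw [hTeq] at hreach
      exact hbridge (hru.trans (hreach.trans hrv.symm))
    · have hsub : ∀ e ∈ c.edges, e ∈ T.edgeSet := by
        intro e hee
        have := c.edges_subset_edgeSet hee
        rw [hedge] at this
        rcases this with h | h
        · exact absurd (h ▸ hee) he
        · exact h.1
      exact hT.IsAcyclic (c.transfer T hsub) (hc.transfer hsub)
  exact ⟨⟨hconn, hacyc⟩, hedge, hadj', hnmem⟩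



lemma exists_isTree (V : Type*) [Nonempty V] : ∃ T : SimpleGraph V, T.IsTree := by
  obtain ⟨v₀⟩ := ‹Nonempty V›
  refine ⟨SimpleGraph.fromRel (fun a _ => a = v₀), ?_, ?_⟩
  · have hreach : ∀ a : V, (SimpleGraph.fromRel (fun a _ => a = v₀)).Reachable v₀ a := by
      intro a
      by_cases h : a = v₀
      · subst h; exact Reachable.refl _
      · refine SimpleGraph.Adj.reachable ?_
        rw [fromRel_adj]
        exact ⟨Ne.symm h, Or.inl rfl⟩
    have : Nonempty V := ⟨v₀⟩
    exact Connected.mk fun a b => (hreach a).symm.trans (hreach b)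
  · rw [isAcyclic_iff_forall_adj_isBridge]
    intro a b hab
    rw [isBridge_iff]
    refine fun hr => ?_
    obtain ⟨hne, hor⟩ := (fromRel_adj _ _ _).mp hab
    -- the non-center endpoint is isolated after removing the edge
    have key : ∀ (c d : V), c ≠ v₀ → s(c, d) = s(a, b) →
        ∀ w, ¬ (SimpleGraph.fromRel (fun a _ => a = v₀) \ fromEdgeSet {s(a, b)}).Adj c w := by
      intro c d hc hcd w hw
      rw [sdiff_adj, fromRel_adj, fromEdgeSet_adj] at hw
      obtain ⟨⟨hcw, hor'⟩, hnf⟩ := hw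
      rcases hor' with h | h
      · exact hc h
      · apply hnf
        have hd : d = v₀ := by
          rw [Sym2.eq_iff] at hcd
          rcases hcd with ⟨rfl, rfl⟩ | ⟨rfl, rfl⟩
          · rcases hor with h' | h'
            · exact absurd h' hc
            · exact h'
          · rcases hor with h' | h'
            · exact h'
            · exact absurd h' hc
        refine ⟨?_, hcw⟩
        simp [← hcd, hd, h]
    rcases hor with h | h
    · -- a = v₀, so b ≠ v₀ is isolated
      have hb : b ≠ v₀ := fun hbv => hne (h.trans hbv.symm)
      obtain ⟨w⟩ := hr.symm
      cases w with
      | nil => exact hne rfl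
      | cons hadj p => exact key b a hb (Sym2.eq_swap) _ hadj
    · have ha : a ≠ v₀ := fun hav => hne (hav.trans h.symm)
      obtain ⟨w⟩ := hr
      cases w with
      | nil => exact hne rfl
      | cons hadj p => exact key a b ha rfl _ hadj

lemma edgeLen_mk {E : Type*} [NormedAddCommGroup E] {X : Finset E}
    (u v : {x // x ∈ X}) : edgeLen s(u, v) = ‖(u : E) - (v : E)‖ := rfl

lemma graphLen_swap {E : Type*} [NormedAddCommGroup E] {X : Finset E}
    {T T' : SimpleGraph {x // x ∈ X}} {e₁ e₂ : Sym2 {x // x ∈ X}}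
    (hedge : T'.edgeSet = insert e₂ (T.edgeSet \ {e₁}))
    (h1 : e₁ ∈ T.edgeSet) (h2 : e₂ ∉ T.edgeSet) :
    graphLen T' = graphLen T - edgeLen e₁ + edgeLen e₂ := by
  have hne : e₂ ≠ e₁ := fun h => h2 (h ▸ h1)
  have hfin : T'.edgeFinset = insert e₂ (T.edgeFinset.erase e₁) := by
    ext e
    rw [mem_edgeFinset, hedge]
    simp only [Set.mem_insert_iff, Set.mem_diff, Set.mem_singleton_iff,
      Finset.mem_insert, Finset.mem_erase, mem_edgeFinset]
    tauto
  rw [graphLen, hfin, Finset.sum_insert (by simp [Finset.mem_erase, mem_edgeFinset, h2]),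
    Finset.sum_erase_eq_sub (by rwa [mem_edgeFinset]), graphLen]
  ring

lemma degree_swap {V : Type*} [Fintype V] {T T' : SimpleGraph V} {s₀ z p q : V}
    (hadj' : ∀ a b : V, T'.Adj a b ↔ (T.Adj a b ∧ s(a, b) ≠ s(s₀, z)) ∨ s(a, b) = s(p, q))
    (hp : p ≠ s₀) (hq : q ≠ s₀) (hz : T.Adj s₀ z) :
    (T'.neighborFinset s₀).card + 1 = (T.neighborFinset s₀).card := by
  have hfin : T'.neighborFinset s₀ = (T.neighborFinset s₀).erase z := by
    ext w
    rw [mem_neighborFinset, hadj', Finset.mem_erase, mem_neighborFinset]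
    constructor
    · rintro (⟨h, hne⟩ | h)
      · exact ⟨fun hwz => hne (by rw [hwz]), h⟩
      · exfalso
        rw [Sym2.eq_iff] at h
        rcases h with ⟨h', _⟩ | ⟨h', _⟩
        · exact hp h'.symm
        · exact hq h'.symm
    · rintro ⟨hwz, h⟩
      exact Or.inl ⟨h, fun he => hwz (Sym2.congr_right.mp he)⟩
  rw [hfin, Finset.card_erase_of_mem (by rw [mem_neighborFinset]; exact hz)]
  have : 0 < (T.neighborFinset s₀).card :=
    Finset.card_pos.mpr ⟨z, by rw [mem_neighborFinset]; exact hz⟩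
  omega

/-- Lemma 4 of the paper: given the hexagon points `y₀, …, y₅` of Lemma 2, a finite
nonempty terminal set `X` and a point `s ∉ X`, there is a minimum spanning tree `T` on
`X ∪ {s}` such that, for each of the six cones, at most one terminal adjacent to `s` in
`T` lies in that cone (relative to `s`), and such a terminal is closest to `s` among all
terminals in that cone. -/
theorem exists_mst_neighbours_in_cones
    {E : Type*} [NormedAddCommGroup E] [NormedSpace ℝ E]
    (hdim : Module.finrank ℝ E = 2)
    (y : ZMod 6 → E)
    (hy₁ : ∀ i, ‖y i‖ = 1)
    (hy₂ : ∀ i, ‖y (i + 1) - y i‖ = 1)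
    (hy₃ : ∀ i, y (i + 3) = -y i)
    (hy₄ : ∀ v : E, ∃ i, v ∈ cone (y i) (y (i + 1)))
    (X : Finset E) (hX : X.Nonempty) (s : E) (hs : s ∉ X) :
    ∃ T : SimpleGraph {x // x ∈ insert s X}, IsMST T ∧
      ∀ i : ZMod 6,
        (∀ x x' : {x // x ∈ insert s X},
          T.Adj ⟨s, Finset.mem_insert_self s X⟩ x →
          T.Adj ⟨s, Finset.mem_insert_self s X⟩ x' →
          (x : E) ∈ X → (x' : E) ∈ X →
          (x : E) - s ∈ cone (y i) (y (i + 1)) →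
          (x' : E) - s ∈ cone (y i) (y (i + 1)) → x = x') ∧
        (∀ x : {x // x ∈ insert s X},
          T.Adj ⟨s, Finset.mem_insert_self s X⟩ x →
          (x : E) ∈ X → (x : E) - s ∈ cone (y i) (y (i + 1)) →
          ∀ x' ∈ X, x' - s ∈ cone (y i) (y (i + 1)) →
            ‖(x : E) - s‖ ≤ ‖x' - s‖) := by
  
  classical
  have hsV : s ∈ insert s X := Finset.mem_insert_self s X
  set s₀ : {x // x ∈ insert s X} := ⟨s, hsV⟩ with hs₀def
  have hne' : Nonempty {x // x ∈ insert s X} := ⟨s₀⟩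
  obtain ⟨T₀, hT₀⟩ := exists_isTree {x // x ∈ insert s X}
  obtain ⟨Tm, hTm, hTmin⟩ := Finset.exists_min_image
    (Finset.univ.filter fun G : SimpleGraph {x // x ∈ insert s X} => G.IsTree)
    graphLen ⟨T₀, by simp [hT₀]⟩
  rw [Finset.mem_filter] at hTm
  have hTmMST : IsMST Tm := ⟨hTm.2, fun G' hG' => hTmin G' (by simp [hG'])⟩
  obtain ⟨T, hTmem, hdeg⟩ := Finset.exists_min_image
    (Finset.univ.filter fun G : SimpleGraph {x // x ∈ insert s X} => IsMST G)
    (fun G => (G.neighborFinset s₀).card) ⟨Tm, by simp [hTmMST]⟩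
  rw [Finset.mem_filter] at hTmem
  have hT : IsMST T := hTmem.2
  have hdeg' : ∀ G : SimpleGraph {x // x ∈ insert s X}, IsMST G →
      (T.neighborFinset s₀).card ≤ (G.neighborFinset s₀).card :=
    fun G hG => hdeg G (by simp [hG])
  have core1 : ∀ x x' : {x // x ∈ insert s X}, T.Adj s₀ x → T.Adj s₀ x' → x ≠ x' →
      ‖(x : E) - (x' : E)‖ ≤ ‖(x' : E) - s‖ → False := by
    intro x x' hx hx' hxx hlen
    have hxs : x ≠ s₀ := fun h => T.irrefl (h ▸ hx)
    have hx's : x' ≠ s₀ := fun h => T.irrefl (h ▸ hx')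
    have hDadjx : (T \ SimpleGraph.fromEdgeSet {s(s₀, x')}).Adj s₀ x := by
      rw [SimpleGraph.sdiff_adj, SimpleGraph.fromEdgeSet_adj]
      exact ⟨hx, fun hf => hxx (Sym2.congr_right.mp (by simpa using hf.1))⟩
    have hne1 : s(x, x') ≠ s(s₀, x') := by
      intro h
      rw [Sym2.eq_iff] at h
      rcases h with ⟨h1, _⟩ | ⟨h1, h2⟩
      · exact hxs h1
      · exact hxx h1
    obtain ⟨hT't, hT'e, hT'a, hT'nm⟩ :=
      tree_swap hT.1 hx' hxx hne1 hDadjx.reachable (SimpleGraph.Reachable.refl _)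
    have hglen := graphLen_swap hT'e hx' hT'nm
    have hlen2 : edgeLen s(x, x') ≤ edgeLen s(s₀, x') := by
      rw [edgeLen_mk, edgeLen_mk]
      calc ‖(x : E) - (x' : E)‖ ≤ ‖(x' : E) - s‖ := hlen
        _ = ‖(s₀ : E) - (x' : E)‖ := by rw [norm_sub_rev]
    have hT'MST : IsMST ((T \ SimpleGraph.fromEdgeSet {s(s₀, x')}) ⊔
        SimpleGraph.fromEdgeSet {s(x, x')}) :=
      ⟨hT't, fun G' hG' => le_trans (by linarith) (hT.2 G' hG')⟩
    have hcard := degree_swap hT'a hxs hx's hx'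
    have := hdeg' _ hT'MST
    omega
  have core2 : ∀ x x' : {x // x ∈ insert s X}, T.Adj s₀ x → x' ≠ s₀ →
      ‖(x' : E) - s‖ < ‖(x : E) - s‖ → ‖(x : E) - (x' : E)‖ ≤ ‖(x : E) - s‖ → False := by
    intro x x' hx hx's hlt hlen
    have hxs : x ≠ s₀ := fun h => T.irrefl (h ▸ hx)
    have hx'x : x' ≠ x := by
      intro h
      rw [h] at hlt
      exact lt_irrefl _ hlt
    rcases tree_comp_dichotomy (u₁ := s₀) (v₁ := x) hT.1.isConnected x' with hreach | hreach
    · have hne1 : s(x', x) ≠ s(s₀, x) := by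
        intro h
        rw [Sym2.eq_iff] at h
        rcases h with ⟨h1, _⟩ | ⟨h1, _⟩
        · exact hx's h1
        · exact hx'x h1
      obtain ⟨hT't, hT'e, hT'a, hT'nm⟩ :=
        tree_swap hT.1 hx hx'x hne1 hreach (SimpleGraph.Reachable.refl _)
      have hglen := graphLen_swap hT'e hx hT'nm
      have hlen2 : edgeLen s(x', x) ≤ edgeLen s(s₀, x) := by
        rw [edgeLen_mk, edgeLen_mk]
        calc ‖(x' : E) - (x : E)‖ = ‖(x : E) - (x' : E)‖ := norm_sub_rev _ _
          _ ≤ ‖(x : E) - s‖ := hlen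
          _ = ‖(s₀ : E) - (x : E)‖ := by rw [norm_sub_rev]
      have hT'MST : IsMST ((T \ SimpleGraph.fromEdgeSet {s(s₀, x)}) ⊔
          SimpleGraph.fromEdgeSet {s(x', x)}) :=
        ⟨hT't, fun G' hG' => le_trans (by linarith) (hT.2 G' hG')⟩
      have hcard := degree_swap hT'a hx's hxs hx
      have := hdeg' _ hT'MST
      omega
    · have hne1 : s(s₀, x') ≠ s(s₀, x) := fun h => hx'x (Sym2.congr_right.mp h)
      obtain ⟨hT't, hT'e, hT'a, hT'nm⟩ :=
        tree_swap hT.1 hx (Ne.symm hx's) hne1 (SimpleGraph.Reachable.refl _) hreach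
      have hglen := graphLen_swap hT'e hx hT'nm
      have hlen2 : edgeLen s(s₀, x') < edgeLen s(s₀, x) := by
        rw [edgeLen_mk, edgeLen_mk]
        calc ‖(s₀ : E) - (x' : E)‖ = ‖(x' : E) - s‖ := norm_sub_rev _ _
          _ < ‖(x : E) - s‖ := hlt
          _ = ‖(s₀ : E) - (x : E)‖ := by rw [norm_sub_rev]
      have := hT.2 _ hT't
      linarith
  refine ⟨T, hT, fun i => ⟨?_, ?_⟩⟩
  · intro x x' hax hax' hxX hx'X hcx hcx'
    by_contra hxx
    have hgeom : ‖(x : E) - (x' : E)‖ ≤ max ‖(x : E) - s‖ ‖(x' : E) - s‖ := by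
      have := cone_norm_sub_le (hy₁ i) (hy₁ (i + 1)) (hy₂ i) hcx hcx'
      rwa [sub_sub_sub_cancel_right] at this
    rcases le_total ‖(x : E) - s‖ ‖(x' : E) - s‖ with h | h
    · exact core1 x x' hax hax' hxx (le_trans hgeom (le_of_eq (max_eq_right h)))
    · have hgeom' : ‖(x' : E) - (x : E)‖ ≤ ‖(x : E) - s‖ := by
        rw [norm_sub_rev]
        exact le_trans hgeom (le_of_eq (max_eq_left h))
      exact core1 x' x hax' hax (Ne.symm hxx) hgeom'
  · intro x hax hxX hcx x' hx'X hcx'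
    by_contra hlt
    push_neg at hlt
    have hx'mem : x' ∈ insert s X := Finset.mem_insert_of_mem hx'X
    have hx's : (⟨x', hx'mem⟩ : {x // x ∈ insert s X}) ≠ s₀ := by
      intro h
      apply hs
      have hxs' : x' = s := congrArg Subtype.val h
      rwa [← hxs']
    have hgeom : ‖(x : E) - x'‖ ≤ ‖(x : E) - s‖ := by
      have := cone_norm_sub_le (hy₁ i) (hy₁ (i + 1)) (hy₂ i) hcx hcx'
      rw [sub_sub_sub_cancel_right] at this
      exact le_trans this (le_of_eq (max_eq_left hlt.le))
    exact core2 x ⟨x', hx'mem⟩ hax hx's hlt hgeom
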